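/- Let P be an n×n substochastic matrix (nonnegative entries with row sums at most 1) such that for every state i there exists k ≥ 0 and a state j with (P^k)_{ij} > 0 and the j-th row sum of P strictly less than 1. Then the spectral radius of P is strictly less than 1, and hence I − P is invertible. -/
import Mathlib

open Matrix Finset

/-- A substochastic matrix in which every state can reach (in some number of steps, with
positive probability) a state whose row sum is strictly less than 1 has spectral radius
strictly less than 1; hence `I - P` is invertible. -/
theorem substochastic_spectral_radius_lt_one {n : ℕ} (P : Matrix (Fin n) (Fin n) ℝ)
    (hnonneg : ∀ i j, 0 ≤ P i j) (hrow : ∀ i, ∑ j, P i j ≤ 1)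
    (hreach : ∀ i : Fin n, ∃ (k : ℕ) (j : Fin n), 0 < (P ^ k) i j ∧ ∑ j', P j j' < 1) :
    (∀ μ ∈ spectrum ℂ (P.map (fun x : ℝ => (x : ℂ))), ‖μ‖ < 1) ∧ IsUnit (1 - P) := by
  -- entrywise nonnegativity of powers
  have hpow_nonneg : ∀ k i j, 0 ≤ (P ^ k) i j := by
    intro k
    induction k with
    | zero =>
      intro i j
      simp only [pow_zero, Matrix.one_apply]
      split <;> norm_num
    | succ k ih =>
      intro i j
      rw [pow_succ, Matrix.mul_apply]
      exact Finset.sum_nonneg fun l _ => mul_nonneg (ih i l) (hnonneg l j)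
  set s : ℕ → Fin n → ℝ := fun k i => ∑ j, (P ^ k) i j with hs
  have hsplit : ∀ a b i, s (a + b) i = ∑ l, (P ^ a) i l * s b l := by
    intro a b i
    simp only [hs]
    rw [pow_add]
    simp only [Matrix.mul_apply]
    rw [Finset.sum_comm]
    exact Finset.sum_congr rfl fun l _ => (Finset.mul_sum _ _ _).symm
  have hs_le : ∀ k i, s k i ≤ 1 := by
    intro k
    induction k with
    | zero => intro i; simp [hs, Matrix.one_apply]
    | succ k ih =>
      intro i
      rw [show k + 1 = k + 1 from rfl, hsplit k 1 i]
      calc ∑ l, (P ^ k) i l * s 1 l ≤ ∑ l, (P ^ k) i l * 1 := by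
            refine Finset.sum_le_sum fun l _ => ?_
            refine mul_le_mul_of_nonneg_left ?_ (hpow_nonneg k i l)
            simpa [hs, pow_one] using hrow l
        _ = s k i := by simp [hs]
        _ ≤ 1 := ih i
  have hs_add : ∀ a b i, s (a + b) i ≤ s a i := by
    intro a b i
    rw [hsplit a b i]
    calc ∑ l, (P ^ a) i l * s b l ≤ ∑ l, (P ^ a) i l * 1 :=
        Finset.sum_le_sum fun l _ =>
          mul_le_mul_of_nonneg_left (hs_le b l) (hpow_nonneg a i l)
      _ = s a i := by simp [hs]
  have hstrict : ∀ i, ∃ k, s (k + 1) i < 1 := by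
    intro i
    obtain ⟨k, j, hkj, hj⟩ := hreach i
    refine ⟨k, ?_⟩
    rw [hsplit k 1 i]
    have hlt : ∑ l, (P ^ k) i l * s 1 l < ∑ l, (P ^ k) i l := by
      refine Finset.sum_lt_sum (fun l _ => ?_) ⟨j, Finset.mem_univ j, ?_⟩
      · calc (P ^ k) i l * s 1 l ≤ (P ^ k) i l * 1 :=
            mul_le_mul_of_nonneg_left (hs_le 1 l) (hpow_nonneg k i l)
          _ = (P ^ k) i l := mul_one _
      · have hsj : s 1 j < 1 := by simpa [hs, pow_one] using hj
        calc (P ^ k) i j * s 1 j < (P ^ k) i j * 1 :=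
            (mul_lt_mul_iff_right₀ hkj).mpr hsj
          _ = (P ^ k) i j := mul_one _
    exact lt_of_lt_of_le hlt (hs_le k i)
  -- find a uniform N with all row sums of P^N < 1
  have hN : ∃ N, ∀ i, s N i < 1 := by
    choose k hk using hstrict
    rcases Nat.eq_zero_or_pos n with hn | hn
    · subst hn; exact ⟨1, fun i => i.elim0⟩
    refine ⟨Finset.univ.sup k + 1, fun i => ?_⟩
    have h1 : k i + 1 ≤ Finset.univ.sup k + 1 :=
      Nat.succ_le_succ (Finset.le_sup (Finset.mem_univ i))
    obtain ⟨m, hm⟩ := Nat.exists_eq_add_of_le h1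
    rw [hm]
    exact lt_of_le_of_lt (hs_add (k i + 1) m i) (hk i)
  obtain ⟨N, hNlt⟩ := hN
  -- complexified matrix facts
  have hmap_mul : ∀ (M Q : Matrix (Fin n) (Fin n) ℝ),
      (M * Q).map (fun x : ℝ => (x : ℂ)) =
        M.map (fun x : ℝ => (x : ℂ)) * Q.map (fun x : ℝ => (x : ℂ)) := by
    intro M Q
    ext i j
    simp [Matrix.mul_apply, Matrix.map_apply]
  have part1 : ∀ μ ∈ spectrum ℂ (P.map (fun x : ℝ => (x : ℂ))), ‖μ‖ < 1 := by
    intro μ hμ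
    set A := P.map (fun x : ℝ => (x : ℂ)) with hA
    rw [spectrum.mem_iff, Matrix.isUnit_iff_isUnit_det, isUnit_iff_ne_zero, not_not] at hμ
    obtain ⟨v, hv0, hv⟩ := (Matrix.exists_mulVec_eq_zero_iff).mpr hμ
    have hAv : A.mulVec v = μ • v := by
      rw [Matrix.sub_mulVec] at hv
      have h1 : (algebraMap ℂ (Matrix (Fin n) (Fin n) ℂ) μ).mulVec v = μ • v := by
        rw [Algebra.algebraMap_eq_smul_one, Matrix.smul_mulVec, Matrix.one_mulVec]
      have := sub_eq_zero.mp hv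
      rw [h1] at this
      exact this.symm
    have hpowv : ∀ m, ((P ^ m).map (fun x : ℝ => (x : ℂ))).mulVec v = (μ ^ m) • v := by
      intro m
      induction m with
      | zero =>
        simp only [pow_zero, one_smul]
        have : (1 : Matrix (Fin n) (Fin n) ℝ).map (fun x : ℝ => (x : ℂ)) = 1 := by
          ext i j; simp [Matrix.map_apply, Matrix.one_apply]; split <;> simp
        rw [this, Matrix.one_mulVec]
      | succ m ih =>
        rw [pow_succ, hmap_mul, ← Matrix.mulVec_mulVec, ← hA, hAv,
          Matrix.mulVec_smul, ih, smul_smul, pow_succ, mul_comm]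
    obtain ⟨i0, hi0⟩ : ∃ i, v i ≠ 0 := by
      by_contra h; push_neg at h; exact hv0 (funext h)
    obtain ⟨i, -, hmax⟩ := Finset.exists_max_image Finset.univ (fun i => ‖v i‖)
      ⟨i0, Finset.mem_univ i0⟩
    have hvipos : 0 < ‖v i‖ :=
      lt_of_lt_of_le (norm_pos_iff.mpr hi0) (hmax i0 (Finset.mem_univ i0))
    have key : ∑ j, ((P ^ N) i j : ℂ) * v j = μ ^ N * v i := by
      have := congrFun (hpowv N) i
      simpa [Matrix.mulVec, dotProduct, Matrix.map_apply, Pi.smul_apply,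
        smul_eq_mul] using this
    have hnorm : ‖μ‖ ^ N * ‖v i‖ ≤ s N i * ‖v i‖ := by
      calc ‖μ‖ ^ N * ‖v i‖ = ‖μ ^ N * v i‖ := by rw [norm_mul, norm_pow]
        _ = ‖∑ j, ((P ^ N) i j : ℂ) * v j‖ := by rw [key]
        _ ≤ ∑ j, ‖((P ^ N) i j : ℂ) * v j‖ := norm_sum_le _ _
        _ = ∑ j, (P ^ N) i j * ‖v j‖ := by
            refine Finset.sum_congr rfl fun j _ => ?_
            rw [norm_mul, Complex.norm_real, Real.norm_eq_abs,
              abs_of_nonneg (hpow_nonneg N i j)]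
        _ ≤ ∑ j, (P ^ N) i j * ‖v i‖ :=
            Finset.sum_le_sum fun j _ =>
              mul_le_mul_of_nonneg_left (hmax j (Finset.mem_univ j)) (hpow_nonneg N i j)
        _ = s N i * ‖v i‖ := by rw [← Finset.sum_mul]
    have hμN : ‖μ‖ ^ N < 1 :=
      lt_of_le_of_lt (le_of_mul_le_mul_right hnorm hvipos) (hNlt i)
    by_contra hge
    push_neg at hge
    exact absurd hμN (not_lt.mpr (one_le_pow₀ hge))
  refine ⟨part1, ?_⟩
  by_contra h
  have hdet : (1 - P).det = 0 := by
    by_contra hd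
    exact h ((Matrix.isUnit_iff_isUnit_det _).mpr (isUnit_iff_ne_zero.mpr hd))
  have h1 : (1 : ℂ) ∈ spectrum ℂ (P.map fun x : ℝ => (x : ℂ)) := by
    rw [spectrum.mem_iff, Matrix.isUnit_iff_isUnit_det, isUnit_iff_ne_zero, not_not]
    have heq : (algebraMap ℂ (Matrix (Fin n) (Fin n) ℂ) 1 - P.map (fun x : ℝ => (x : ℂ))) =
        (1 - P).map Complex.ofRealHom := by
      ext i j
      simp [Matrix.map_apply, Matrix.algebraMap_matrix_apply, Matrix.one_apply,
        Matrix.sub_apply]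
      split <;> simp
    rw [heq]
    show (Complex.ofRealHom.mapMatrix (1 - P)).det = 0
    rw [← RingHom.map_det, hdet, map_zero]
  have := part1 1 h1
  norm_num at this
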